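/- Let d, k be positive integers, H ≥ 1, L ≥ 1, λ̃ ≥ 1. Let φ₁, …, φ_{k-1} ∈ ℝ^d satisfy ‖φ_i‖₂ ≤ 1, let w₁, …, w_{k-1} ∈ [0,1], let V₁, …, V_{k-1} ∈ [0, H], let b ∈ ℝ^d with ‖b‖₂ ≤ L, and let K₁ be a symmetric positive semidefinite d×d real matrix. Define Λ = 2λ̃·I_d + Σ_{i=1}^{k-1} w_i · φ_i φ_iᵀ + K₁. Then Λ is positive definite and ‖Λ⁻¹ (Σ_{i=1}^{k-1} w_i V_i φ_i + b)‖₂ ≤ H·k·L·√(2d/λ̃). -/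

import Mathlib

open Matrix

/-- The Euclidean norm of a vector in `ℝ^d`. -/
noncomputable def euclNorm {d : ℕ} (x : Fin d → ℝ) : ℝ := Real.sqrt (∑ i, x i ^ 2)

lemma euclNorm_eq {d : ℕ} (x : Fin d → ℝ) :
    euclNorm x = ‖(WithLp.equiv 2 (Fin d → ℝ)).symm x‖ := by
  rw [EuclideanSpace.norm_eq]
  simp [euclNorm, sq_abs]

lemma dot_eq_inner {d : ℕ} (x y : Fin d → ℝ) :
    dotProduct x y = inner ℝ ((WithLp.equiv 2 (Fin d → ℝ)).symm x)
      ((WithLp.equiv 2 (Fin d → ℝ)).symm y) := by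
  simp [dotProduct, PiLp.inner_apply, RCLike.inner_apply, mul_comm]

lemma sum_mulVec' {d m : ℕ} (M : Fin m → Matrix (Fin d) (Fin d) ℝ) (x : Fin d → ℝ) :
    (∑ i, M i) *ᵥ x = ∑ i, M i *ᵥ x :=
  map_sum (AddMonoidHom.mk' (fun A => A *ᵥ x) (fun A B => Matrix.add_mulVec A B x)) M
    Finset.univ

lemma dotProduct_sum' {d m : ℕ} (u : Fin d → ℝ) (v : Fin m → Fin d → ℝ) :
    dotProduct u (∑ i, v i) = ∑ i, dotProduct u (v i) :=
  map_sum (AddMonoidHom.mk' (fun z => dotProduct u z) (fun a b => dotProduct_add u a b))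
    v Finset.univ

lemma vecMulVec_mulVec' {d : ℕ} (v x : Fin d → ℝ) :
    (vecMulVec v v) *ᵥ x = (dotProduct v x) • v := by
  ext i
  simp [vecMulVec, mulVec, dotProduct, Finset.mul_sum]
  rw [Finset.sum_mul]
  exact Finset.sum_congr rfl fun j _ => by ring

/-- **Norm bound on the privatized weighted-ridge-regression weight vector.**
With `Λ = 2λ̃ I + ∑_{i=1}^{k-1} w_i φ_i φ_iᵀ + K₁`, `Λ` is positive definite and
`‖Λ⁻¹ (∑ w_i V_i φ_i + b)‖₂ ≤ H k L √(2d/λ̃)`. -/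
theorem stmt_3 (d k : ℕ) (hd : 0 < d) (hk : 0 < k) (H L lam : ℝ)
    (hH : 1 ≤ H) (hL : 1 ≤ L) (hlam : 1 ≤ lam)
    (φ : Fin (k - 1) → Fin d → ℝ) (hφ : ∀ i, euclNorm (φ i) ≤ 1)
    (w : Fin (k - 1) → ℝ) (hw : ∀ i, w i ∈ Set.Icc (0 : ℝ) 1)
    (V : Fin (k - 1) → ℝ) (hV : ∀ i, V i ∈ Set.Icc (0 : ℝ) H)
    (b : Fin d → ℝ) (hb : euclNorm b ≤ L)
    (K₁ : Matrix (Fin d) (Fin d) ℝ) (hK₁ : K₁.PosSemidef)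
    (Λ : Matrix (Fin d) (Fin d) ℝ)
    (hΛ : Λ = (2 * lam) • (1 : Matrix (Fin d) (Fin d) ℝ)
        + ∑ i, w i • vecMulVec (φ i) (φ i) + K₁) :
    Λ.PosDef ∧
      euclNorm (Λ⁻¹ *ᵥ (∑ i, (w i * V i) • φ i + b))
        ≤ H * k * L * Real.sqrt (2 * d / lam) := by
  have hlam0 : (0:ℝ) < lam := lt_of_lt_of_le one_pos hlam
  have h2lam : (0:ℝ) < 2 * lam := by linarith
  -- PSD of each rank one term
  have hterm : ∀ i, (w i • vecMulVec (φ i) (φ i)).PosSemidef := by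
    intro i
    refine Matrix.PosSemidef.of_dotProduct_mulVec_nonneg ?_ ?_
    · show _ᴴ = _
      ext a c
      simp [vecMulVec, conjTranspose_apply, mul_comm]
    · intro x
      rw [smul_mulVec, vecMulVec_mulVec', dotProduct_smul, dotProduct_smul]
      have hst : star x = x := by simp
      rw [hst]
      have : dotProduct (φ i) x * dotProduct x (φ i) = (dotProduct (φ i) x)^2 := by
        rw [dotProduct_comm x (φ i)]; ring
      rw [smul_eq_mul, smul_eq_mul, this]
      exact mul_nonneg (hw i).1 (sq_nonneg _)
  have hsum : (∑ i, w i • vecMulVec (φ i) (φ i) : Matrix (Fin d) (Fin d) ℝ).PosSemidef := by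
    refine Matrix.PosSemidef.of_dotProduct_mulVec_nonneg ?_ ?_
    · show _ᴴ = _
      rw [conjTranspose_sum]
      exact Finset.sum_congr rfl fun i _ => (hterm i).1
    · intro x
      rw [sum_mulVec', dotProduct_sum']
      exact Finset.sum_nonneg fun i _ => (hterm i).dotProduct_mulVec_nonneg x
  have hone : ((2 * lam) • (1 : Matrix (Fin d) (Fin d) ℝ)).PosDef := by
    refine Matrix.PosDef.of_dotProduct_mulVec_pos ?_ ?_
    · show _ᴴ = _
      simp
    · intro x hx
      rw [smul_mulVec, one_mulVec, dotProduct_smul]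
      have hst : star x = x := by simp
      rw [hst, smul_eq_mul]
      have hxx : 0 < dotProduct x x := by
        have := Matrix.dotProduct_star_self_pos_iff (v := x)
        rw [hst] at this
        exact this.mpr hx
      positivity
  have hPD : Λ.PosDef := by
    rw [hΛ, add_assoc]
    exact hone.add_posSemidef (hsum.add hK₁)
  refine ⟨hPD, ?_⟩
  set y := ∑ i, (w i * V i) • φ i + b with hy
  set x := Λ⁻¹ *ᵥ y with hx
  have hdet : IsUnit Λ.det := isUnit_iff_ne_zero.mpr hPD.det_pos.ne'
  have hxy : Λ *ᵥ x = y := by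
    rw [hx, mulVec_mulVec, Matrix.mul_nonsing_inv _ hdet, one_mulVec]
  -- quadratic lower bound
  have hquad : 2 * lam * dotProduct x x ≤ dotProduct x y := by
    rw [← hxy, hΛ]
    rw [add_mulVec, add_mulVec, dotProduct_add, dotProduct_add,
      smul_mulVec, one_mulVec, dotProduct_smul, smul_eq_mul]
    have h1 : 0 ≤ dotProduct x ((∑ i, w i • vecMulVec (φ i) (φ i)) *ᵥ x) := by
      have := hsum.dotProduct_mulVec_nonneg x
      simpa using this
    have h2 : 0 ≤ dotProduct x (K₁ *ᵥ x) := by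
      have := hK₁.dotProduct_mulVec_nonneg x
      simpa using this
    linarith
  have hCS : dotProduct x y ≤ euclNorm x * euclNorm y := by
    rw [dot_eq_inner, euclNorm_eq, euclNorm_eq]
    exact real_inner_le_norm _ _
  have hxx : dotProduct x x = euclNorm x ^ 2 := by
    rw [dot_eq_inner, euclNorm_eq]
    exact real_inner_self_eq_norm_sq _
  have hnx0 : 0 ≤ euclNorm x := Real.sqrt_nonneg _
  have hny0 : 0 ≤ euclNorm y := Real.sqrt_nonneg _
  have hx_le : euclNorm x ≤ euclNorm y / (2 * lam) := by
    rw [le_div_iff₀ h2lam]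
    rcases eq_or_lt_of_le hnx0 with h | h
    · rw [← h]; simpa using hny0
    · nlinarith [hquad, hCS, hxx]
  -- bound on ‖y‖
  have hny : euclNorm y ≤ (k - 1 : ℕ) * H + L := by
    rw [euclNorm_eq]
    have hrfl : (WithLp.equiv 2 (Fin d → ℝ)).symm y
        = (∑ i, (w i * V i) • (WithLp.equiv 2 (Fin d → ℝ)).symm (φ i))
          + (WithLp.equiv 2 (Fin d → ℝ)).symm b := by simp [hy]
    rw [hrfl]
    refine le_trans (norm_add_le _ _) (add_le_add ?_ (by rw [← euclNorm_eq]; exact hb))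
    refine le_trans (norm_sum_le _ _) ?_
    have : ∀ i : Fin (k-1), ‖(w i * V i) • (WithLp.equiv 2 (Fin d → ℝ)).symm (φ i)‖ ≤ H := by
      intro i
      rw [norm_smul]
      have hφi : ‖(WithLp.equiv 2 (Fin d → ℝ)).symm (φ i)‖ ≤ 1 := by
        rw [← euclNorm_eq]; exact hφ i
      have h1 : |w i * V i| ≤ H := by
        rw [abs_of_nonneg (mul_nonneg (hw i).1 (hV i).1)]
        calc w i * V i ≤ 1 * H := mul_le_mul (hw i).2 (hV i).2 (hV i).1 zero_le_one
        _ = H := one_mul H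
      calc |w i * V i| * ‖(WithLp.equiv 2 (Fin d → ℝ)).symm (φ i)‖
          ≤ H * 1 := mul_le_mul h1 hφi (norm_nonneg _) (by linarith)
        _ = H := mul_one H
    calc ∑ i, ‖(w i * V i) • (WithLp.equiv 2 (Fin d → ℝ)).symm (φ i)‖
        ≤ ∑ _i : Fin (k-1), H := Finset.sum_le_sum fun i _ => this i
      _ = (k - 1 : ℕ) * H := by simp [Finset.sum_const, nsmul_eq_mul]
  -- arithmetic
  have hk1 : ((k - 1 : ℕ) : ℝ) ≤ (k : ℝ) - 1 := by
    rw [Nat.cast_sub hk]; simp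
  have hkR : (1:ℝ) ≤ (k:ℝ) := by exact_mod_cast hk
  have hH0 : (0:ℝ) ≤ H := by linarith
  have hny2 : euclNorm y ≤ H * k * L := by
    have h1 : ((k - 1 : ℕ) : ℝ) * H + L ≤ ((k:ℝ) - 1) * H + L := by nlinarith
    have hkH : (1:ℝ) ≤ (k:ℝ) * H := by nlinarith
    have e1 : (0:ℝ) ≤ ((k:ℝ) * H - 1) * (L - 1) := mul_nonneg (by linarith) (by linarith)
    have h2 : ((k:ℝ) - 1) * H + L ≤ H * k * L := by nlinarith [e1]
    linarith
  have hsqrt : 1 / (2 * lam) ≤ Real.sqrt (2 * d / lam) := by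
    rw [show (1:ℝ) / (2*lam) = Real.sqrt ((1/(2*lam))^2) from
      (Real.sqrt_sq (by positivity)).symm]
    apply Real.sqrt_le_sqrt
    rw [div_pow, one_pow, div_le_div_iff₀ (by positivity) hlam0]
    have hdR : (1:ℝ) ≤ (d:ℝ) := by exact_mod_cast hd
    nlinarith
  have hfin : euclNorm y / (2 * lam) ≤ H * k * L * Real.sqrt (2 * d / lam) := by
    have hHkL : (0:ℝ) ≤ H * k * L := by positivity
    calc euclNorm y / (2 * lam) = euclNorm y * (1 / (2 * lam)) := by ring
      _ ≤ (H * k * L) * Real.sqrt (2 * d / lam) :=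
        mul_le_mul hny2 hsqrt (by positivity) hHkL
  exact le_trans hx_le hfin
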